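/- Under the physical-intensity assumption, the expected negative log-likelihood f(z) = −E[Σ_{t=1}^{N} (−(1−y_t)·h·Λ_t(z;y) + y_t·log(1 − e^{−h·Λ_t(z;y)}))] is κ'-strongly convex on Θ_K, where κ' = e^{−2·h·b}·(b/B)²·h²·e^{−B·τ_max}; that is, for all z, z̃ ∈ Θ_K and all λ ∈ [0,1], f(λ·z + (1−λ)·z̃) ≤ λ·f(z) + (1−λ)·f(z̃) − (κ'/2)·λ·(1−λ)·‖z − z̃‖₂². -/

import Mathlib

open Finset
open scoped BigOperators RealInnerProductSpace

noncomputable section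

/-- Real value of a Boolean: `1` if `true`, `0` if `false`. -/
def bval (b : Bool) : ℝ := if b then 1 else 0

/-- The time window of indices `-N'+1, …, N`. -/
def window (N N' : ℕ) : Finset ℤ := Finset.Icc (-(N' : ℤ) + 1) (N : ℤ)

/-- The probability mass function of the discrete-time Bernoulli process with
true conditional intensities `Λ`. -/
def seqPMF (N N' : ℕ) (h : ℝ) (Λ : ℤ → (ℤ → Bool) → ℝ) (y : ℤ → Bool) : ℝ :=
  ∏ t ∈ window N N',
    ((1 - bval (y t)) * Real.exp (-(h * Λ t y))
      + bval (y t) * (1 - Real.exp (-(h * Λ t y))))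

/-- Extension of a window-indexed binary sequence to all of `ℤ` (by `false`). -/
def extSeq (N N' : ℕ) (w : ↥(window N N') → Bool) : ℤ → Bool :=
  fun i => if hi : i ∈ window N N' then w ⟨i, hi⟩ else false

/-- Expectation with respect to the law of the process. -/
def expect (N N' : ℕ) (h : ℝ) (Λ : ℤ → (ℤ → Bool) → ℝ) (f : (ℤ → Bool) → ℝ) : ℝ :=
  ∑ w : ↥(window N N') → Bool, seqPMF N N' h Λ (extSeq N N' w) * f (extSeq N N' w)

/-- The index set of the kernel parameter: pairs `(i, t)` with `1 ≤ t ≤ N` and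
`t - N' ≤ i ≤ t - 1`. -/
def kIdx (N N' : ℕ) : Finset (ℤ × ℤ) :=
  (Finset.Icc (-(N' : ℤ) + 1) (N : ℤ) ×ˢ Finset.Icc 1 (N : ℤ)).filter
    (fun p => p.2 - (N' : ℤ) ≤ p.1 ∧ p.1 ≤ p.2 - 1)

/-- The space `ℝ^{N·N'}` of kernel parameters, with Euclidean structure. -/
abbrev Param (N N' : ℕ) := EuclideanSpace ℝ ↥(kIdx N N')

/-- Entry `z_{i,t}` of a kernel parameter (zero outside the index set). -/
def zent (N N' : ℕ) (z : Param N N') (i t : ℤ) : ℝ :=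
  if hm : (i, t) ∈ kIdx N N' then z ⟨(i, t), hm⟩ else 0

/-- The model intensity `Λ_t(z; y) = μ + ∑_{i = t-N'}^{t-1} y_i z_{i,t}`. -/
def modelIntensity (N N' : ℕ) (μ : ℝ) (z : Param N N') (t : ℤ) (y : ℤ → Bool) : ℝ :=
  μ + ∑ i ∈ Finset.Icc (t - (N' : ℤ)) (t - 1), bval (y i) * zent N N' z i t

/-- The history vector `η_t(y)`: entry `y_i` at index `(i, t)`, zero elsewhere. -/
def eta (N N' : ℕ) (t : ℤ) (y : ℤ → Bool) : Param N N' :=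
  WithLp.toLp 2 (fun p : ↥(kIdx N N') => if p.1.2 = t then bval (y p.1.1) else 0)

/-- The link function `φ(x) = 1 - e^{-x}`. -/
def phi (x : ℝ) : ℝ := 1 - Real.exp (-x)

/-- The per-trajectory VI vector field
`Ĝ(z; y) = ∑_{t=1}^N (φ(h Λ_t(z;y)) - y_t) η_t(y)`. -/
def Ghat (N N' : ℕ) (h μ : ℝ) (z : Param N N') (y : ℤ → Bool) : Param N N' :=
  ∑ t ∈ Finset.Icc (1 : ℤ) (N : ℤ),
    (phi (h * modelIntensity N N' μ z t y) - bval (y t)) • eta N N' t y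

/-- Expectation of a vector-valued statistic with respect to the law of the process. -/
def expectVec {E : Type*} [AddCommMonoid E] [Module ℝ E]
    (N N' : ℕ) (h : ℝ) (Λ : ℤ → (ℤ → Bool) → ℝ) (f : (ℤ → Bool) → E) : E :=
  ∑ w : ↥(window N N') → Bool, seqPMF N N' h Λ (extSeq N N' w) • f (extSeq N N' w)

/-- The expected negative log-likelihood
`f(z) = -E[ ∑_{t=1}^N ( -(1-y_t) h Λ_t(z;y) + y_t log(1 - e^{-h Λ_t(z;y)}) ) ]`. -/
def negLogLik (N N' : ℕ) (h : ℝ) (Λ : ℤ → (ℤ → Bool) → ℝ) (μ : ℝ)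
    (z : Param N N') : ℝ :=
  - expect N N' h Λ (fun y =>
      ∑ t ∈ Finset.Icc (1 : ℤ) (N : ℤ),
        (-(1 - bval (y t)) * (h * modelIntensity N N' μ z t y)
          + bval (y t) * Real.log (1 - Real.exp (-(h * modelIntensity N N' μ z t y)))))



lemma one_sub_exp_pos {x : ℝ} (hx : 0 < x) : 0 < 1 - Real.exp (-x) := by
  have : Real.exp (-x) < 1 := Real.exp_lt_one_iff.mpr (by linarith)
  linarith

lemma one_sub_exp_le {x : ℝ} : 1 - Real.exp (-x) ≤ x := by
  have := Real.add_one_le_exp (-x)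
  linarith

lemma mul_exp_le_one_sub {x : ℝ} (hx : 0 ≤ x) : x * Real.exp (-x) ≤ 1 - Real.exp (-x) := by
  have h1 := Real.add_one_le_exp x
  have h2 : 0 < Real.exp (-x) := Real.exp_pos _
  have h3 : Real.exp x * Real.exp (-x) = 1 := by
    rw [← Real.exp_add]; simp
  nlinarith

/-- strong convexity of ψ(x) = -log(1-e^{-x}) on [m,M] -/
lemma psi_strong {m M : ℝ} (hm : 0 < m) (hmM : m ≤ M)
    {x x' a b : ℝ} (hx : x ∈ Set.Icc m M) (hx' : x' ∈ Set.Icc m M)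
    (ha : 0 ≤ a) (hb : 0 ≤ b) (hab : a + b = 1) :
    -Real.log (1 - Real.exp (-(a * x + b * x')))
      ≤ a * (-Real.log (1 - Real.exp (-x))) + b * (-Real.log (1 - Real.exp (-x')))
        - Real.exp (-M) / M ^ 2 / 2 * (a * b * (x - x') ^ 2) := by
  set c₀ : ℝ := Real.exp (-M) / M ^ 2 with hc₀
  set ψ : ℝ → ℝ := fun x => -Real.log (1 - Real.exp (-x)) with hψ
  set g : ℝ → ℝ := fun x => ψ x - c₀ / 2 * x ^ 2 with hg
  -- derivative facts
  have hM : 0 < M := lt_of_lt_of_le hm hmM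
  have hd1 : ∀ x : ℝ, HasDerivAt (fun x : ℝ => 1 - Real.exp (-x)) (Real.exp (-x)) x := by
    intro x
    have h : HasDerivAt (fun x : ℝ => Real.exp (-x)) (Real.exp (-x) * (-1)) x :=
      (Real.hasDerivAt_exp (-x)).comp x (hasDerivAt_neg x)
    have := h.const_sub 1
    simpa using this
  have hne : ∀ x : ℝ, 0 < x → (1 - Real.exp (-x)) ≠ 0 := fun x hx => ne_of_gt (one_sub_exp_pos hx)
  set g' : ℝ → ℝ := fun x => -(Real.exp (-x) / (1 - Real.exp (-x))) - c₀ * x with hg'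
  have hdg : ∀ x : ℝ, 0 < x → HasDerivAt g (g' x) x := by
    intro x hx0
    have hlog : HasDerivAt (fun x : ℝ => Real.log (1 - Real.exp (-x)))
        (Real.exp (-x) / (1 - Real.exp (-x))) x := (hd1 x).log (hne x hx0)
    have hsq : HasDerivAt (fun x : ℝ => c₀ / 2 * x ^ 2) (c₀ * x) x := by
      have := (hasDerivAt_pow 2 x).const_mul (c₀ / 2)
      simpa using this.congr_deriv (by ring)
    exact (hlog.neg.sub hsq)
  set g'' : ℝ → ℝ := fun x => Real.exp (-x) / (1 - Real.exp (-x)) ^ 2 - c₀ with hg''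
  have hdg' : ∀ x : ℝ, 0 < x → HasDerivAt g' (g'' x) x := by
    intro x hx0
    have hexp : HasDerivAt (fun x : ℝ => Real.exp (-x)) (-Real.exp (-x)) x := by
      have := (Real.hasDerivAt_exp (-x)).comp x (hasDerivAt_neg x)
      exact this.congr_deriv (by ring)
    have hdiv : HasDerivAt (fun x : ℝ => Real.exp (-x) / (1 - Real.exp (-x)))
        ((-Real.exp (-x) * (1 - Real.exp (-x)) - Real.exp (-x) * Real.exp (-x))
          / (1 - Real.exp (-x)) ^ 2) x := hexp.div (hd1 x) (hne x hx0)
    have hlin : HasDerivAt (fun x : ℝ => c₀ * x) c₀ x := by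
      simpa using (hasDerivAt_id x).const_mul c₀
    have := hdiv.neg.sub hlin
    apply this.congr_deriv
    rw [show (-Real.exp (-x) * (1 - Real.exp (-x)) - Real.exp (-x) * Real.exp (-x))
        = -Real.exp (-x) from by ring, neg_div, neg_neg]
  -- convexity of g on Icc
  have hIcc : interior (Set.Icc m M) = Set.Ioo m M := interior_Icc
  have hcg : ConvexOn ℝ (Set.Icc m M) g := by
    apply convexOn_of_deriv2_nonneg (convex_Icc m M)
    · -- continuity
      apply ContinuousOn.sub
      · apply ContinuousOn.neg
        apply ContinuousOn.log
        · exact (continuous_const.sub (Real.continuous_exp.comp continuous_neg)).continuousOn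
        · intro x hx
          exact hne x (lt_of_lt_of_le hm hx.1)
      · exact (continuous_const.mul (continuous_pow 2)).continuousOn
    · rw [hIcc]
      intro x hx
      exact (hdg x (lt_trans hm hx.1)).differentiableAt.differentiableWithinAt
    · rw [hIcc]
      intro x hx
      have hx0 : 0 < x := lt_trans hm hx.1
      have : deriv g =ᶠ[nhds x] g' := by
        filter_upwards [IsOpen.mem_nhds isOpen_Ioo hx] with y hy
        exact (hdg y (lt_trans hm hy.1)).deriv
      exact ((hdg' x hx0).differentiableAt.congr_of_eventuallyEq this).differentiableWithinAt
    · rw [hIcc]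
      intro x hx
      have hx0 : 0 < x := lt_trans hm hx.1
      have hEq : deriv g =ᶠ[nhds x] g' := by
        filter_upwards [IsOpen.mem_nhds isOpen_Ioo hx] with y hy
        exact (hdg y (lt_trans hm hy.1)).deriv
      have h2 : deriv (deriv g) x = g'' x := by
        rw [Filter.EventuallyEq.deriv_eq hEq]
        exact (hdg' x hx0).deriv
      have : deriv^[2] g x = deriv (deriv g) x := by
        simp [Function.iterate_succ, Function.comp]
      rw [this, h2]
      -- g'' x ≥ 0
      have hxM : x ≤ M := le_of_lt hx.2
      have hpos : 0 < 1 - Real.exp (-x) := one_sub_exp_pos hx0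
      have hle : 1 - Real.exp (-x) ≤ M := le_trans one_sub_exp_le hxM
      have hee : Real.exp (-M) ≤ Real.exp (-x) := Real.exp_le_exp.mpr (by linarith)
      have : c₀ ≤ Real.exp (-x) / (1 - Real.exp (-x)) ^ 2 := by
        rw [hc₀, div_le_div_iff₀ (by positivity) (by positivity)]
        have hsq : (1 - Real.exp (-x)) ^ 2 ≤ M ^ 2 := by nlinarith
        calc Real.exp (-M) * (1 - Real.exp (-x)) ^ 2 ≤ Real.exp (-M) * M ^ 2 := by
              nlinarith [Real.exp_pos (-M)]
          _ ≤ Real.exp (-x) * M ^ 2 := by nlinarith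
      simp only [hg'']
      linarith
  -- extract two-point inequality
  have hmem : a • x + b • x' ∈ Set.Icc m M := (convex_Icc m M) hx hx' ha hb hab
  have hineq := hcg.2 hx hx' ha hb hab
  simp only [smul_eq_mul, hg] at hineq
  have key : a * x ^ 2 + b * x' ^ 2 - (a * x + b * x') ^ 2 = a * b * (x - x') ^ 2 := by
    have hb1 : b = 1 - a := by linarith
    subst hb1; ring
  have heq : a * ψ x + b * ψ x' - c₀ / 2 * (a * b * (x - x') ^ 2)
      = (a * (ψ x - c₀ / 2 * x ^ 2) + b * (ψ x' - c₀ / 2 * x' ^ 2))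
        + c₀ / 2 * (a * x + b * x') ^ 2 := by
    have hb1 : b = 1 - a := by linarith
    subst hb1; ring
  have : ψ (a * x + b * x') ≤ a * ψ x + b * ψ x' - c₀ / 2 * (a * b * (x - x') ^ 2) := by
    rw [heq]; linarith
  simpa [hψ] using this


/-- indicator sequence of a finite set -/
def indC (S : Finset ℤ) : ℤ → Bool := fun i => decide (i ∈ S)

lemma chain (c : ℤ → ℝ) (σ : ℤ → Bool) (q : ℤ → (ℤ → Bool) → ℝ) (T : Finset ℤ) :
    ∀ S₀ : Finset ℤ, S₀ ⊆ T →
    (∀ s ∈ T, ∀ y y' : ℤ → Bool, (∀ i, i ≤ s → y i = y' i) → q s y = q s y') →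
    (∀ s ∈ T, ∀ y : ℤ → Bool, 0 ≤ q s y) →
    (∀ s ∈ T, ∀ y y' : ℤ → Bool, (∀ i, i ≠ s → y i = y' i) → y s = false → y' s = true →
      q s y + q s y' = 1) →
    (∀ s ∈ S₀, ∀ y : ℤ → Bool, (∀ u ∈ S₀, y u = σ u) → c s ≤ q s y) →
    (∀ s ∈ S₀, 0 ≤ c s) →
    ∏ s ∈ S₀, c s ≤
      ∑ S ∈ T.powerset.filter (fun S => ∀ u ∈ S₀, indC S u = σ u), ∏ s ∈ T, q s (indC S) := by
  induction T using Finset.induction_on_max with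
  | empty =>
    intro S₀ hS₀ _ _ _ _ _
    have hS : S₀ = ∅ := Finset.subset_empty.mp hS₀
    subst hS
    simp
  | insert a s hlt ih =>
    intro S₀ hS₀ dep pos sum1 lb cnn
    have ha : a ∉ s := fun h => lt_irrefl a (hlt a h)
    have has' : a ∈ insert a s := Finset.mem_insert_self a s
    have hindag : ∀ S : Finset ℤ, S ⊆ s → ∀ t ∈ s, q t (indC (insert a S)) = q t (indC S) := by
      intro S hSs t ht
      apply dep t (Finset.mem_insert_of_mem ht)
      intro i hi
      have hia : i ≠ a := ne_of_lt (lt_of_le_of_lt hi (hlt t ht))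
      simp [indC, Finset.mem_insert, hia]
    have hsplit : ∀ S : Finset ℤ,
        ∏ t ∈ insert a s, q t (indC S) = q a (indC S) * ∏ t ∈ s, q t (indC S) :=
      fun S => Finset.prod_insert ha
    have hprods : ∀ S : Finset ℤ, S ⊆ s →
        ∏ t ∈ s, q t (indC (insert a S)) = ∏ t ∈ s, q t (indC S) :=
      fun S hSs => Finset.prod_congr rfl (hindag S hSs)
    have hq1 : ∀ S : Finset ℤ, S ⊆ s → q a (indC S) + q a (indC (insert a S)) = 1 := by
      intro S hSs
      apply sum1 a has'
      · intro i hia; simp [indC, Finset.mem_insert, hia]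
      · have : a ∉ S := fun h => ha (hSs h)
        simp [indC, this]
      · simp [indC]
    have dep' : ∀ t ∈ s, ∀ y y' : ℤ → Bool, (∀ i, i ≤ t → y i = y' i) → q t y = q t y' :=
      fun t ht => dep t (Finset.mem_insert_of_mem ht)
    have pos' : ∀ t ∈ s, ∀ y : ℤ → Bool, 0 ≤ q t y :=
      fun t ht => pos t (Finset.mem_insert_of_mem ht)
    have sum1' : ∀ t ∈ s, ∀ y y' : ℤ → Bool, (∀ i, i ≠ t → y i = y' i) → y t = false →
        y' t = true → q t y + q t y' = 1 := fun t ht => sum1 t (Finset.mem_insert_of_mem ht)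
    by_cases haS₀ : a ∈ S₀
    · -- a is a constrained coordinate
      have hS₀e : S₀.erase a ⊆ s := by
        intro u hu
        have hu' := hS₀ (Finset.mem_of_mem_erase hu)
        rcases Finset.mem_insert.mp hu' with h | h
        · exact absurd h (Finset.ne_of_mem_erase hu)
        · exact h
      have lb' : ∀ t ∈ S₀.erase a, ∀ y : ℤ → Bool,
          (∀ u ∈ S₀.erase a, y u = σ u) → c t ≤ q t y := by
        intro t ht y hy
        have hts : t ∈ s := hS₀e ht
        have hta : t < a := hlt t hts
        have key : c t ≤ q t (Function.update y a (σ a)) := by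
          apply lb t (Finset.mem_of_mem_erase ht)
          intro u hu
          by_cases hua : u = a
          · subst hua; simp
          · rw [Function.update_of_ne hua]
            exact hy u (Finset.mem_erase.mpr ⟨hua, hu⟩)
        have heq : q t y = q t (Function.update y a (σ a)) := by
          apply dep t (Finset.mem_insert_of_mem hts)
          intro i hi
          have : i ≠ a := ne_of_lt (lt_of_le_of_lt hi hta)
          rw [Function.update_of_ne this]
        rw [heq]; exact key
      have cnn' : ∀ t ∈ S₀.erase a, 0 ≤ c t := fun t ht => cnn t (Finset.mem_of_mem_erase ht)
      have ihe := ih (S₀.erase a) hS₀e dep' pos' sum1' lb' cnn'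
      rw [Finset.sum_filter] at ihe
      have hca : 0 ≤ c a := cnn a haS₀
      have hprodS₀ : ∏ u ∈ S₀, c u = c a * ∏ u ∈ S₀.erase a, c u :=
        (Finset.mul_prod_erase S₀ c haS₀).symm
      have hmul : c a * (∑ S ∈ s.powerset,
            if (∀ u ∈ S₀.erase a, indC S u = σ u) then ∏ t ∈ s, q t (indC S) else 0)
          = ∑ S ∈ s.powerset,
            (if (∀ u ∈ S₀.erase a, indC S u = σ u) then c a * ∏ t ∈ s, q t (indC S) else 0) := by
        rw [Finset.mul_sum]
        exact Finset.sum_congr rfl (fun S _ => by split <;> simp)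
      cases hσa : σ a with
      | true =>
        have h1 : ∀ S ∈ s.powerset,
            (if (∀ u ∈ S₀, indC S u = σ u) then ∏ t ∈ insert a s, q t (indC S) else 0) = 0 := by
          intro S hS
          have hanS : a ∉ S := fun h => ha (Finset.mem_powerset.mp hS h)
          have hnP : ¬ (∀ u ∈ S₀, indC S u = σ u) := by
            intro hPS
            have := hPS a haS₀
            rw [hσa] at this
            simp [indC, hanS] at this
          rw [if_neg hnP]
        have h2 : ∀ S ∈ s.powerset,
            (if (∀ u ∈ S₀.erase a, indC S u = σ u) then c a * ∏ t ∈ s, q t (indC S) else 0)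
              ≤ (if (∀ u ∈ S₀, indC (insert a S) u = σ u)
                  then ∏ t ∈ insert a s, q t (indC (insert a S)) else 0) := by
          intro S hS
          have hSs : S ⊆ s := Finset.mem_powerset.mp hS
          have hPiff : (∀ u ∈ S₀, indC (insert a S) u = σ u)
              ↔ (∀ u ∈ S₀.erase a, indC S u = σ u) := by
            constructor
            · intro h u hu
              have hua : u ≠ a := Finset.ne_of_mem_erase hu
              have h2 := h u (Finset.mem_of_mem_erase hu)
              rwa [show indC (insert a S) u = indC S u from by
                simp [indC, Finset.mem_insert, hua]] at h2
            · intro h u hu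
              by_cases hua : u = a
              · subst hua; simp [indC, hσa]
              · rw [show indC (insert a S) u = indC S u from by
                  simp [indC, Finset.mem_insert, hua]]
                exact h u (Finset.mem_erase.mpr ⟨hua, hu⟩)
          by_cases hPS : (∀ u ∈ S₀.erase a, indC S u = σ u)
          · rw [if_pos hPS, if_pos (hPiff.mpr hPS), hsplit, hprods S hSs]
            have hqa : c a ≤ q a (indC (insert a S)) := by
              apply lb a haS₀
              intro u hu
              by_cases hua : u = a
              · subst hua; simp [indC, hσa]
              · rw [show indC (insert a S) u = indC S u from by
                  simp [indC, Finset.mem_insert, hua]]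
                exact hPS u (Finset.mem_erase.mpr ⟨hua, hu⟩)
            have hpr : 0 ≤ ∏ t ∈ s, q t (indC S) :=
              Finset.prod_nonneg (fun t ht => pos' t ht _)
            exact mul_le_mul_of_nonneg_right hqa hpr
          · rw [if_neg hPS, if_neg (fun h => hPS (hPiff.mp h))]
        calc ∏ u ∈ S₀, c u = c a * ∏ u ∈ S₀.erase a, c u := hprodS₀
          _ ≤ c a * ∑ S ∈ s.powerset,
              (if (∀ u ∈ S₀.erase a, indC S u = σ u) then ∏ t ∈ s, q t (indC S) else 0) :=
            mul_le_mul_of_nonneg_left ihe hca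
          _ = ∑ S ∈ s.powerset,
              (if (∀ u ∈ S₀.erase a, indC S u = σ u) then c a * ∏ t ∈ s, q t (indC S) else 0) :=
            hmul
          _ ≤ ∑ S ∈ s.powerset,
              (if (∀ u ∈ S₀, indC (insert a S) u = σ u)
                then ∏ t ∈ insert a s, q t (indC (insert a S)) else 0) :=
            Finset.sum_le_sum h2
          _ = (∑ S ∈ s.powerset,
                (if (∀ u ∈ S₀, indC S u = σ u) then ∏ t ∈ insert a s, q t (indC S) else 0))
              + ∑ S ∈ s.powerset,
                (if (∀ u ∈ S₀, indC (insert a S) u = σ u)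
                  then ∏ t ∈ insert a s, q t (indC (insert a S)) else 0) := by
            rw [Finset.sum_eq_zero h1, zero_add]
          _ = ∑ S ∈ (insert a s).powerset,
              (if (∀ u ∈ S₀, indC S u = σ u) then ∏ t ∈ insert a s, q t (indC S) else 0) :=
            (Finset.sum_powerset_insert ha _).symm
          _ = _ := (Finset.sum_filter _ _).symm
      | false =>
        have h1 : ∀ S ∈ s.powerset,
            (if (∀ u ∈ S₀, indC (insert a S) u = σ u)
              then ∏ t ∈ insert a s, q t (indC (insert a S)) else 0) = 0 := by
          intro S hS
          have hnP : ¬ (∀ u ∈ S₀, indC (insert a S) u = σ u) := by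
            intro hPS
            have := hPS a haS₀
            rw [hσa] at this
            simp [indC] at this
          rw [if_neg hnP]
        have h2 : ∀ S ∈ s.powerset,
            (if (∀ u ∈ S₀.erase a, indC S u = σ u) then c a * ∏ t ∈ s, q t (indC S) else 0)
              ≤ (if (∀ u ∈ S₀, indC S u = σ u) then ∏ t ∈ insert a s, q t (indC S) else 0) := by
          intro S hS
          have hSs : S ⊆ s := Finset.mem_powerset.mp hS
          have hanS : a ∉ S := fun h => ha (hSs h)
          have hPiff : (∀ u ∈ S₀, indC S u = σ u) ↔ (∀ u ∈ S₀.erase a, indC S u = σ u) := by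
            constructor
            · intro h u hu
              exact h u (Finset.mem_of_mem_erase hu)
            · intro h u hu
              by_cases hua : u = a
              · subst hua; simp [indC, hanS, hσa]
              · exact h u (Finset.mem_erase.mpr ⟨hua, hu⟩)
          by_cases hPS : (∀ u ∈ S₀.erase a, indC S u = σ u)
          · rw [if_pos hPS, if_pos (hPiff.mpr hPS), hsplit]
            have hqa : c a ≤ q a (indC S) := by
              apply lb a haS₀
              intro u hu
              by_cases hua : u = a
              · subst hua; simp [indC, hanS, hσa]
              · exact hPS u (Finset.mem_erase.mpr ⟨hua, hu⟩)
            have hpr : 0 ≤ ∏ t ∈ s, q t (indC S) :=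
              Finset.prod_nonneg (fun t ht => pos' t ht _)
            exact mul_le_mul_of_nonneg_right hqa hpr
          · rw [if_neg hPS, if_neg (fun h => hPS (hPiff.mp h))]
        calc ∏ u ∈ S₀, c u = c a * ∏ u ∈ S₀.erase a, c u := hprodS₀
          _ ≤ c a * ∑ S ∈ s.powerset,
              (if (∀ u ∈ S₀.erase a, indC S u = σ u) then ∏ t ∈ s, q t (indC S) else 0) :=
            mul_le_mul_of_nonneg_left ihe hca
          _ = ∑ S ∈ s.powerset,
              (if (∀ u ∈ S₀.erase a, indC S u = σ u) then c a * ∏ t ∈ s, q t (indC S) else 0) :=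
            hmul
          _ ≤ ∑ S ∈ s.powerset,
              (if (∀ u ∈ S₀, indC S u = σ u) then ∏ t ∈ insert a s, q t (indC S) else 0) :=
            Finset.sum_le_sum h2
          _ = (∑ S ∈ s.powerset,
                (if (∀ u ∈ S₀, indC S u = σ u) then ∏ t ∈ insert a s, q t (indC S) else 0))
              + ∑ S ∈ s.powerset,
                (if (∀ u ∈ S₀, indC (insert a S) u = σ u)
                  then ∏ t ∈ insert a s, q t (indC (insert a S)) else 0) := by
            rw [Finset.sum_eq_zero h1, add_zero]
          _ = ∑ S ∈ (insert a s).powerset,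
              (if (∀ u ∈ S₀, indC S u = σ u) then ∏ t ∈ insert a s, q t (indC S) else 0) :=
            (Finset.sum_powerset_insert ha _).symm
          _ = _ := (Finset.sum_filter _ _).symm
    · -- a unconstrained: marginalize it out
      have hS₀s : S₀ ⊆ s := by
        intro u hu
        rcases Finset.mem_insert.mp (hS₀ hu) with h | h
        · exact absurd (h ▸ hu) haS₀
        · exact h
      have key : ∀ S ∈ s.powerset,
          (if (∀ u ∈ S₀, indC S u = σ u) then ∏ t ∈ s, q t (indC S) else 0)
          = (if (∀ u ∈ S₀, indC S u = σ u) then ∏ t ∈ insert a s, q t (indC S) else 0)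
            + (if (∀ u ∈ S₀, indC (insert a S) u = σ u)
                then ∏ t ∈ insert a s, q t (indC (insert a S)) else 0) := by
        intro S hS
        have hSs : S ⊆ s := Finset.mem_powerset.mp hS
        have hh : ∀ u ∈ S₀, indC (insert a S) u = indC S u := by
          intro u hu
          have hua : u ≠ a := fun he => haS₀ (he ▸ hu)
          simp [indC, Finset.mem_insert, hua]
        have hPiff : (∀ u ∈ S₀, indC (insert a S) u = σ u) ↔ (∀ u ∈ S₀, indC S u = σ u) := by
          constructor <;> intro h u hu
          · rw [← hh u hu]; exact h u hu
          · rw [hh u hu]; exact h u hu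
        by_cases hPS : (∀ u ∈ S₀, indC S u = σ u)
        · have e1 : (if (∀ u ∈ S₀, indC S u = σ u)
              then ∏ t ∈ insert a s, q t (indC S) else 0)
              = q a (indC S) * ∏ t ∈ s, q t (indC S) := by rw [if_pos hPS, hsplit]
          have e2 : (if (∀ u ∈ S₀, indC (insert a S) u = σ u)
              then ∏ t ∈ insert a s, q t (indC (insert a S)) else 0)
              = q a (indC (insert a S)) * ∏ t ∈ s, q t (indC S) := by
            rw [if_pos (hPiff.mpr hPS), hsplit, hprods S hSs]
          rw [e1, e2, if_pos hPS]
          linear_combination (-(∏ t ∈ s, q t (indC S))) * (hq1 S hSs)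
        · rw [if_neg hPS, if_neg hPS, if_neg (fun h => hPS (hPiff.mp h)), add_zero]
      calc ∏ u ∈ S₀, c u
          ≤ ∑ S ∈ s.powerset,
            (if (∀ u ∈ S₀, indC S u = σ u) then ∏ t ∈ s, q t (indC S) else 0) := by
            have := ih S₀ hS₀s dep' pos' sum1' lb cnn
            rwa [Finset.sum_filter] at this
        _ = ∑ S ∈ s.powerset,
            ((if (∀ u ∈ S₀, indC S u = σ u) then ∏ t ∈ insert a s, q t (indC S) else 0)
              + (if (∀ u ∈ S₀, indC (insert a S) u = σ u)
                  then ∏ t ∈ insert a s, q t (indC (insert a S)) else 0)) :=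
          Finset.sum_congr rfl key
        _ = (∑ S ∈ s.powerset,
              (if (∀ u ∈ S₀, indC S u = σ u) then ∏ t ∈ insert a s, q t (indC S) else 0))
            + ∑ S ∈ s.powerset,
              (if (∀ u ∈ S₀, indC (insert a S) u = σ u)
                then ∏ t ∈ insert a s, q t (indC (insert a S)) else 0) :=
          Finset.sum_add_distrib
        _ = ∑ S ∈ (insert a s).powerset,
            (if (∀ u ∈ S₀, indC S u = σ u) then ∏ t ∈ insert a s, q t (indC S) else 0) :=
          (Finset.sum_powerset_insert ha _).symm
        _ = _ := (Finset.sum_filter _ _).symm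



-- the Bernoulli factor at time t
def facQ (h : ℝ) (Λ : ℤ → (ℤ → Bool) → ℝ) (t : ℤ) (y : ℤ → Bool) : ℝ :=
  (1 - bval (y t)) * Real.exp (-(h * Λ t y)) + bval (y t) * (1 - Real.exp (-(h * Λ t y)))

lemma seqPMF_eq (N N' : ℕ) (h : ℝ) (Λ : ℤ → (ℤ → Bool) → ℝ) (y : ℤ → Bool) :
    seqPMF N N' h Λ y = ∏ t ∈ window N N', facQ h Λ t y := rfl

lemma facQ_false {h : ℝ} {Λ : ℤ → (ℤ → Bool) → ℝ} {t : ℤ} {y : ℤ → Bool} (hy : y t = false) :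
    facQ h Λ t y = Real.exp (-(h * Λ t y)) := by simp [facQ, bval, hy]

lemma facQ_true {h : ℝ} {Λ : ℤ → (ℤ → Bool) → ℝ} {t : ℤ} {y : ℤ → Bool} (hy : y t = true) :
    facQ h Λ t y = 1 - Real.exp (-(h * Λ t y)) := by simp [facQ, bval, hy]

section Pos

variable (N N' : ℕ) (h : ℝ) (Λ : ℤ → (ℤ → Bool) → ℝ) (b B : ℝ)

lemma facQ_pos_all (hh : 0 < h) (hb : 0 < b)
    (hdep : ∀ (t : ℤ) (y y' : ℤ → Bool),
      (∀ i ∈ window N N', i < t → y i = y' i) → Λ t y = Λ t y')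
    (hstar : ∀ t ∈ window N N', ∀ y : ℤ → Bool,
      0 < seqPMF N N' h Λ y → b ≤ Λ t y ∧ Λ t y ≤ B) :
    ∀ y : ℤ → Bool, ∀ s ∈ window N N', 0 < facQ h Λ s y := by
  suffices H : ∀ k : ℕ, ∀ y : ℤ → Bool,
      (∀ s ∈ window N N', (-(N' : ℤ) + 1) + k ≤ s → y s = false) →
      ∀ s ∈ window N N', 0 < facQ h Λ s y by
    intro y
    apply H (N + N') y
    intro s hs hks
    exfalso
    have h1 := (Finset.mem_Icc.mp hs).2
    push_cast at hks
    omega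
  intro k
  induction k with
  | zero =>
    intro y hy s hs
    have hf : y s = false := by
      apply hy s hs
      have := (Finset.mem_Icc.mp hs).1
      omega
    rw [facQ_false hf]
    exact Real.exp_pos _
  | succ k ih =>
    intro y hy s hs
    by_cases hys : y s = false
    · rw [facQ_false hys]; exact Real.exp_pos _
    · have hyt : y s = true := by revert hys; cases y s <;> simp
      set t : ℤ := (-(N' : ℤ) + 1) + k with htdef
      have hst : s ≤ t := by
        by_contra hgt
        have : y s = false := hy s hs (by push_cast; omega)
        rw [this] at hyt; exact Bool.noConfusion hyt
      have hy' : ∀ s' ∈ window N N', t ≤ s' → Function.update y t false s' = false := by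
        intro s' hs' hts
        rcases eq_or_lt_of_le hts with he | hlt
        · rw [← he, Function.update_self]
        · rw [Function.update_of_ne (by omega)]
          exact hy s' hs' (by push_cast; push_cast at hlt; omega)
      have ihy' := ih (Function.update y t false) hy'
      rcases lt_or_eq_of_le hst with hlt | heq
      · -- s < t : factor unchanged
        have hys' : Function.update y t false s = y s := Function.update_of_ne (by omega) _ _
        have hΛ : Λ s y = Λ s (Function.update y t false) :=
          hdep s _ _ (fun i _ hi => (Function.update_of_ne (by omega) _ _).symm)
        have : facQ h Λ s y = facQ h Λ s (Function.update y t false) := by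
          unfold facQ; rw [hΛ, hys']
        rw [this]
        exact ihy' s hs
      · -- s = t and y s = true
        have hp : 0 < seqPMF N N' h Λ (Function.update y t false) := by
          rw [seqPMF_eq]
          exact Finset.prod_pos (fun s' hs' => ihy' s' hs')
        have hbb := (hstar s hs _ hp).1
        have hΛ : Λ s y = Λ s (Function.update y t false) :=
          hdep s _ _ (fun i _ hi => (Function.update_of_ne (by omega) _ _).symm)
        rw [facQ_true hyt]
        have hge : b ≤ Λ s y := by rw [hΛ]; exact hbb
        have hpos : 0 < h * Λ s y := mul_pos hh (lt_of_lt_of_le hb hge)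
        have : Real.exp (-(h * Λ s y)) < 1 := Real.exp_lt_one_iff.mpr (by linarith)
        linarith

end Pos

lemma expect_eq_powerset (N N' : ℕ) (h : ℝ) (Λ : ℤ → (ℤ → Bool) → ℝ) (f : (ℤ → Bool) → ℝ) :
    expect N N' h Λ f
      = ∑ S ∈ (window N N').powerset, seqPMF N N' h Λ (indC S) * f (indC S) := by
  unfold _root_.expect
  have hext : ∀ w : ↥(window N N') → Bool,
      indC ((window N N').filter (fun x => extSeq N N' w x = true)) = extSeq N N' w := by
    intro w
    funext x
    by_cases hx : x ∈ window N N'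
    · simp [indC, Finset.mem_filter, hx]
    · simp [indC, Finset.mem_filter, hx, extSeq]
  apply Finset.sum_bij'
    (i := fun w _ => (window N N').filter (fun x => extSeq N N' w x = true))
    (j := fun S _ => fun i : ↥(window N N') => indC S i.1)
    (hi := fun w _ => Finset.mem_powerset.mpr (Finset.filter_subset _ _))
    (hj := fun S _ => Finset.mem_univ _)
  · -- left inverse
    intro w hw
    funext i
    have := congrFun (hext w) i.1
    rw [this]
    simp [extSeq]
  · -- right inverse
    intro S hS
    have hSsub := Finset.mem_powerset.mp hS
    ext x
    simp only [Finset.mem_filter]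
    constructor
    · rintro ⟨hxw, hx⟩
      simp only [extSeq, dif_pos hxw] at hx
      simpa [indC] using hx
    · intro hxS
      have hxw : x ∈ window N N' := hSsub hxS
      refine ⟨hxw, ?_⟩
      simp [extSeq, dif_pos hxw, indC, hxS]
  · -- values
    intro w hw
    rw [hext w]
-- MAIN NEW LEMMA
lemma expect_ind_ge (N N' : ℕ) (hN' : 1 ≤ N') (h : ℝ) (hh : 0 < h)
    (Λ : ℤ → (ℤ → Bool) → ℝ) (b B : ℝ) (hb : 0 < b)
    (hdep : ∀ (t : ℤ) (y y' : ℤ → Bool),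
      (∀ i ∈ window N N', i < t → y i = y' i) → Λ t y = Λ t y')
    (hstar : ∀ t ∈ window N N', ∀ y : ℤ → Bool,
      0 < seqPMF N N' h Λ y → b ≤ Λ t y ∧ Λ t y ≤ B)
    (i t : ℤ) (ht1 : 1 ≤ t) (htN : t ≤ (N : ℤ)) (hi1 : t - N' ≤ i) (hi2 : i ≤ t - 1) :
    (1 - Real.exp (-(h * b))) ^ 2 * Real.exp (-(h * B)) ^ (N' - 1)
      ≤ expect N N' h Λ
          (fun y => if (∀ u ∈ Finset.Icc (t - (N' : ℤ)) t, y u = decide (u = i ∨ u = t))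
            then 1 else 0) := by
  have hpos := facQ_pos_all N N' h Λ b B hh hb hdep hstar
  have hpmf : ∀ y : ℤ → Bool, 0 < seqPMF N N' h Λ y := by
    intro y; rw [seqPMF_eq]; exact Finset.prod_pos (fun s hs => hpos y s hs)
  have hlam : ∀ s ∈ window N N', ∀ y : ℤ → Bool, b ≤ Λ s y ∧ Λ s y ≤ B :=
    fun s hs y => hstar s hs y (hpmf y)
  have hit : i ≠ t := by omega
  set S₀ : Finset ℤ := Finset.Icc (t - (N' : ℤ)) t with hS₀def
  set σ : ℤ → Bool := fun u => decide (u = i ∨ u = t) with hσdef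
  set c : ℤ → ℝ := fun u => if u = i ∨ u = t then 1 - Real.exp (-(h * b))
    else Real.exp (-(h * B)) with hcdef
  have hS₀T : S₀ ⊆ window N N' := by
    intro u hu
    rw [Finset.mem_Icc] at hu
    rw [window, Finset.mem_Icc]
    omega
  have hexpb : 0 ≤ 1 - Real.exp (-(h * b)) := by
    have : Real.exp (-(h * b)) ≤ 1 := Real.exp_le_one_iff.mpr (by nlinarith)
    linarith
  -- the product of c over S₀
  have hprodc : ∏ u ∈ S₀, c u
      = (1 - Real.exp (-(h * b))) ^ 2 * Real.exp (-(h * B)) ^ (N' - 1) := by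
    rw [← Finset.prod_filter_mul_prod_filter_not S₀ (fun u => u = i ∨ u = t)]
    have hfil : S₀.filter (fun u => u = i ∨ u = t) = {i, t} := by
      ext u
      simp only [Finset.mem_filter, Finset.mem_insert, Finset.mem_singleton, hS₀def,
        Finset.mem_Icc]
      constructor
      · rintro ⟨_, hu⟩; exact hu
      · rintro (rfl | rfl) <;> constructor <;> (first | omega | tauto)
    have h1 : ∏ u ∈ S₀.filter (fun u => u = i ∨ u = t), c u
        = (1 - Real.exp (-(h * b))) ^ 2 := by
      rw [hfil, Finset.prod_insert (by simp [hit]), Finset.prod_singleton]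
      have e1 : c i = 1 - Real.exp (-(h * b)) := by simp [hcdef]
      have e2 : c t = 1 - Real.exp (-(h * b)) := by simp [hcdef]
      rw [e1, e2]; ring
    have h2 : ∏ u ∈ S₀.filter (fun u => ¬(u = i ∨ u = t)), c u
        = Real.exp (-(h * B)) ^ (N' - 1) := by
      have hcc : ∀ u ∈ S₀.filter (fun u => ¬(u = i ∨ u = t)), c u = Real.exp (-(h * B)) := by
        intro u hu
        rw [hcdef]
        exact if_neg (Finset.mem_filter.mp hu).2
      rw [Finset.prod_congr rfl hcc, Finset.prod_const]
      congr 1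
      have hcardS₀ : S₀.card = N' + 1 := by
        rw [hS₀def, Int.card_Icc]; omega
      have hsum := Finset.card_filter_add_card_filter_not (s := S₀)
        (p := fun u => u = i ∨ u = t)
      have hc2 : (S₀.filter (fun u => u = i ∨ u = t)).card = 2 := by
        rw [hfil, Finset.card_insert_of_notMem (by simp [hit]), Finset.card_singleton]
      omega
    rw [h1, h2]
  rw [← hprodc, expect_eq_powerset]
  -- rewrite summand as an if
  have hsummand : ∀ S ∈ (window N N').powerset,
      seqPMF N N' h Λ (indC S)
          * (if (∀ u ∈ Finset.Icc (t - (N' : ℤ)) t, indC S u = decide (u = i ∨ u = t))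
              then (1 : ℝ) else 0)
        = (if (∀ u ∈ S₀, indC S u = σ u) then ∏ s ∈ window N N', facQ h Λ s (indC S) else 0) := by
    intro S _
    rw [hS₀def, hσdef, ← seqPMF_eq]
    split <;> simp
  rw [Finset.sum_congr rfl hsummand, ← Finset.sum_filter]
  -- apply chain
  apply chain c σ (facQ h Λ) (window N N') S₀ hS₀T
  · -- dep
    intro s hs y y' hag
    have hΛ : Λ s y = Λ s y' := hdep s y y' (fun j _ hj => hag j (le_of_lt hj))
    unfold facQ
    rw [hΛ, hag s (le_refl s)]
  · -- pos
    intro s hs y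
    exact le_of_lt (hpos y s hs)
  · -- sum1
    intro s hs y y' hag hf ht'
    have hΛ : Λ s y = Λ s y' := hdep s y y' (fun j _ hj => hag j (by omega))
    rw [facQ_false hf, facQ_true ht', hΛ]
    ring
  · -- lb
    intro s hsS₀ y hy
    have hsT : s ∈ window N N' := hS₀T hsS₀
    have hlb := (hlam s hsT y).1
    have hub := (hlam s hsT y).2
    by_cases hc : s = i ∨ s = t
    · have hys : y s = true := by
        have := hy s hsS₀
        rw [hσdef] at this
        simp only [decide_eq_true_eq] at this ⊢
        rw [this]
        exact decide_eq_true hc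
      have hcs : c s = 1 - Real.exp (-(h * b)) := by simp only [hcdef]; exact if_pos hc
      rw [facQ_true hys, hcs]
      have : Real.exp (-(h * Λ s y)) ≤ Real.exp (-(h * b)) := by
        apply Real.exp_le_exp.mpr
        have : h * b ≤ h * Λ s y := mul_le_mul_of_nonneg_left hlb (le_of_lt hh)
        linarith
      linarith
    · have hys : y s = false := by
        have := hy s hsS₀
        rw [hσdef] at this
        rw [this]
        exact decide_eq_false hc
      have hcs : c s = Real.exp (-(h * B)) := by simp only [hcdef]; exact if_neg hc
      rw [facQ_false hys, hcs]
      apply Real.exp_le_exp.mpr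
      have : h * Λ s y ≤ h * B := mul_le_mul_of_nonneg_left hub (le_of_lt hh)
      linarith
  · -- cnn
    intro s _
    by_cases hc : s = i ∨ s = t
    · rw [show c s = 1 - Real.exp (-(h * b)) from by simp only [hcdef]; exact if_pos hc]
      exact hexpb
    · rw [show c s = Real.exp (-(h * B)) from by simp only [hcdef]; exact if_neg hc]
      exact le_of_lt (Real.exp_pos _)
lemma bval_true {x : Bool} (hx : x = true) : bval x = 1 := by simp [bval, hx]
lemma bval_false {x : Bool} (hx : x = false) : bval x = 0 := by simp [bval, hx]
lemma bval_nonneg (x : Bool) : 0 ≤ bval x := by unfold bval; split <;> norm_num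

lemma zent_lin (N N' : ℕ) (a b : ℝ) (z z' : Param N N') (i t : ℤ) :
    zent N N' (a • z + b • z') i t = a * zent N N' z i t + b * zent N N' z' i t := by
  unfold zent
  split
  · next hm =>
    simp [PiLp.add_apply, PiLp.smul_apply, smul_eq_mul]
  · ring

lemma zent_sub (N N' : ℕ) (z z' : Param N N') (i t : ℤ) :
    zent N N' (z - z') i t = zent N N' z i t - zent N N' z' i t := by
  unfold zent
  split
  · next hm => simp [PiLp.sub_apply]
  · ring

lemma mi_affine (N N' : ℕ) (μ : ℝ) (a b : ℝ) (hab : a + b = 1) (z z' : Param N N')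
    (t : ℤ) (y : ℤ → Bool) :
    modelIntensity N N' μ (a • z + b • z') t y
      = a * modelIntensity N N' μ z t y + b * modelIntensity N N' μ z' t y := by
  unfold modelIntensity
  have hs : ∀ i ∈ Finset.Icc (t - (N' : ℤ)) (t - 1),
      bval (y i) * zent N N' (a • z + b • z') i t
        = a * (bval (y i) * zent N N' z i t) + b * (bval (y i) * zent N N' z' i t) := by
    intro i _
    rw [zent_lin]; ring
  rw [Finset.sum_congr rfl hs, Finset.sum_add_distrib, ← Finset.mul_sum, ← Finset.mul_sum]
  have : μ = a * μ + b * μ := by rw [← add_mul, hab, one_mul]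
  linarith

lemma mi_sub (N N' : ℕ) (μ : ℝ) (z z' : Param N N') (t : ℤ) (y : ℤ → Bool) :
    modelIntensity N N' μ z t y - modelIntensity N N' μ z' t y
      = ∑ i ∈ Finset.Icc (t - (N' : ℤ)) (t - 1), bval (y i) * zent N N' (z - z') i t := by
  unfold modelIntensity
  rw [show ∀ A B C D : ℝ, A + B - (C + D) = B - D + (A - C) from by intros; ring]
  simp only [sub_self, add_zero]
  rw [← Finset.sum_sub_distrib]
  apply Finset.sum_congr rfl
  intro i _
  rw [zent_sub]; ring

lemma norm_sq_eq (N N' : ℕ) (v : Param N N') :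
    ‖v‖ ^ 2 = ∑ p ∈ kIdx N N', (zent N N' v p.1 p.2) ^ 2 := by
  rw [EuclideanSpace.norm_eq, Real.sq_sqrt (by positivity)]
  rw [← Finset.sum_coe_sort (kIdx N N') (fun p => (zent N N' v p.1 p.2) ^ 2)]
  apply Finset.sum_congr rfl
  intro i _
  have hm : ((i : ℤ × ℤ).1, (i : ℤ × ℤ).2) ∈ kIdx N N' := by
    rw [Prod.mk.eta]; exact i.2
  have : zent N N' v (i : ℤ × ℤ).1 (i : ℤ × ℤ).2 = v i := by
    unfold zent
    rw [dif_pos hm]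
  simp [this, Real.norm_eq_abs, sq_abs]

lemma quadLB (N N' : ℕ) (hN' : 1 ≤ N') (v : Param N N') (y : ℤ → Bool) :
    ∑ p ∈ kIdx N N',
      (if (∀ u ∈ Finset.Icc (p.2 - (N' : ℤ)) p.2, y u = decide (u = p.1 ∨ u = p.2))
        then (1 : ℝ) else 0) * (zent N N' v p.1 p.2) ^ 2
    ≤ ∑ t ∈ Finset.Icc (1 : ℤ) (N : ℤ), bval (y t) *
        (∑ i ∈ Finset.Icc (t - (N' : ℤ)) (t - 1), bval (y i) * zent N N' v i t) ^ 2 := by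
  rw [kIdx, Finset.sum_filter, Finset.sum_product, Finset.sum_comm]
  apply Finset.sum_le_sum
  intro t ht
  have hbt := Finset.mem_Icc.mp ht
  have hinner : ∑ i ∈ Finset.Icc (-(N' : ℤ) + 1) (N : ℤ),
      (if ((i, t).2 - (N' : ℤ) ≤ (i, t).1 ∧ (i, t).1 ≤ (i, t).2 - 1) then
        (if (∀ u ∈ Finset.Icc ((i, t).2 - (N' : ℤ)) (i, t).2,
            y u = decide (u = (i, t).1 ∨ u = (i, t).2))
          then (1 : ℝ) else 0) * (zent N N' v (i, t).1 (i, t).2) ^ 2 else 0)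
      = ∑ i ∈ Finset.Icc (t - (N' : ℤ)) (t - 1),
        (if (∀ u ∈ Finset.Icc (t - (N' : ℤ)) t, y u = decide (u = i ∨ u = t))
          then (1 : ℝ) else 0) * (zent N N' v i t) ^ 2 := by
    rw [← Finset.sum_filter]
    apply Finset.sum_congr
    · ext u
      simp only [Finset.mem_filter, Finset.mem_Icc]
      omega
    · intro i _; rfl
  rw [hinner]
  by_cases hex : ∃ i₀, i₀ ∈ Finset.Icc (t - (N' : ℤ)) (t - 1) ∧
      (∀ u ∈ Finset.Icc (t - (N' : ℤ)) t, y u = decide (u = i₀ ∨ u = t)) 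
  · obtain ⟨i₀, hi₀, hcond⟩ := hex
    have hi₀b := Finset.mem_Icc.mp hi₀
    have htmem : t ∈ Finset.Icc (t - (N' : ℤ)) t := Finset.mem_Icc.mpr (by omega)
    have hi₀mem : i₀ ∈ Finset.Icc (t - (N' : ℤ)) t := Finset.mem_Icc.mpr (by omega)
    have hyt : y t = true := by
      rw [hcond t htmem]; simp
    have hyi₀ : y i₀ = true := by
      rw [hcond i₀ hi₀mem]; simp
    have hyj : ∀ j ∈ Finset.Icc (t - (N' : ℤ)) (t - 1), j ≠ i₀ → y j = false := by
      intro j hj hne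
      have hjb := Finset.mem_Icc.mp hj
      rw [hcond j (Finset.mem_Icc.mpr (by omega))]
      simp only [decide_eq_false_iff_not]
      rintro (rfl | rfl)
      · exact hne rfl
      · omega
    have hlhs : ∑ i ∈ Finset.Icc (t - (N' : ℤ)) (t - 1),
        (if (∀ u ∈ Finset.Icc (t - (N' : ℤ)) t, y u = decide (u = i ∨ u = t))
          then (1 : ℝ) else 0) * (zent N N' v i t) ^ 2 = (zent N N' v i₀ t) ^ 2 := by
      rw [Finset.sum_eq_single_of_mem i₀ hi₀]
      · rw [if_pos hcond, one_mul]
      · intro j hj hne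
        have hjb := Finset.mem_Icc.mp hj
        have : ¬ (∀ u ∈ Finset.Icc (t - (N' : ℤ)) t, y u = decide (u = j ∨ u = t)) := by
          intro hc
          have := hc i₀ hi₀mem
          rw [hyi₀] at this
          have : (i₀ = j ∨ i₀ = t) := by
            by_contra hcon
            rw [decide_eq_false hcon] at this
            exact Bool.noConfusion this
          rcases this with h | h
          · exact hne (h ▸ rfl)
          · omega
        rw [if_neg this, zero_mul]
    have hrhs : ∑ i ∈ Finset.Icc (t - (N' : ℤ)) (t - 1), bval (y i) * zent N N' v i t
        = zent N N' v i₀ t := by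
      rw [Finset.sum_eq_single_of_mem i₀ hi₀]
      · rw [bval_true hyi₀, one_mul]
      · intro j hj hne
        rw [bval_false (hyj j hj hne), zero_mul]
    rw [hlhs, hrhs, bval_true hyt, one_mul]
  · have hlhs : ∑ i ∈ Finset.Icc (t - (N' : ℤ)) (t - 1),
        (if (∀ u ∈ Finset.Icc (t - (N' : ℤ)) t, y u = decide (u = i ∨ u = t))
          then (1 : ℝ) else 0) * (zent N N' v i t) ^ 2 = 0 := by
      apply Finset.sum_eq_zero
      intro i hi
      rw [if_neg (fun hc => hex ⟨i, hi, hc⟩), zero_mul]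
    rw [hlhs]
    exact mul_nonneg (bval_nonneg _) (sq_nonneg _)

/-- per-time negative log-likelihood summand -/
def Lfun (N N' : ℕ) (h μ : ℝ) (u : Param N N') (y : ℤ → Bool) : ℝ :=
  ∑ t ∈ Finset.Icc (1 : ℤ) (N : ℤ),
    (-(1 - bval (y t)) * (h * modelIntensity N N' μ u t y)
      + bval (y t) * Real.log (1 - Real.exp (-(h * modelIntensity N N' μ u t y))))

/-- the quadratic statistic -/
def gvfun (N N' : ℕ) (μ : ℝ) (v : Param N N') (y : ℤ → Bool) : ℝ :=
  ∑ t ∈ Finset.Icc (1 : ℤ) (N : ℤ), bval (y t) *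
    (∑ i ∈ Finset.Icc (t - (N' : ℤ)) (t - 1), bval (y i) * zent N N' v i t) ^ 2

/-- indicator statistic -/
def indf (N' : ℕ) (p : ℤ × ℤ) (y : ℤ → Bool) : ℝ :=
  if (∀ u ∈ Finset.Icc (p.2 - (N' : ℤ)) p.2, y u = decide (u = p.1 ∨ u = p.2))
    then 1 else 0

lemma expect_mono (N N' : ℕ) (h : ℝ) (Λ : ℤ → (ℤ → Bool) → ℝ)
    (hpmf : ∀ y : ℤ → Bool, 0 ≤ seqPMF N N' h Λ y) (f g : (ℤ → Bool) → ℝ)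
    (hfg : ∀ y, f y ≤ g y) : expect N N' h Λ f ≤ expect N N' h Λ g := by
  unfold _root_.expect
  exact Finset.sum_le_sum (fun w _ => mul_le_mul_of_nonneg_left (hfg _) (hpmf _))

lemma expect_lin (N N' : ℕ) (h : ℝ) (Λ : ℤ → (ℤ → Bool) → ℝ)
    (A B C : ℝ) (f1 f2 f3 : (ℤ → Bool) → ℝ) :
    expect N N' h Λ (fun y => A * f1 y + B * f2 y + C * f3 y)
      = A * expect N N' h Λ f1 + B * expect N N' h Λ f2 + C * expect N N' h Λ f3 := by
  unfold _root_.expect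
  rw [Finset.mul_sum, Finset.mul_sum, Finset.mul_sum, ← Finset.sum_add_distrib,
    ← Finset.sum_add_distrib]
  exact Finset.sum_congr rfl (fun w _ => by ring)

lemma expect_sum_mul (N N' : ℕ) (h : ℝ) (Λ : ℤ → (ℤ → Bool) → ℝ)
    (s : Finset (ℤ × ℤ)) (F : (ℤ × ℤ) → (ℤ → Bool) → ℝ) (c : (ℤ × ℤ) → ℝ) :
    expect N N' h Λ (fun y => ∑ p ∈ s, F p y * c p)
      = ∑ p ∈ s, expect N N' h Λ (F p) * c p := by
  unfold _root_.expect
  calc ∑ w : ↥(window N N') → Bool,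
        seqPMF N N' h Λ (extSeq N N' w) * ∑ p ∈ s, F p (extSeq N N' w) * c p
      = ∑ w : ↥(window N N') → Bool, ∑ p ∈ s,
          seqPMF N N' h Λ (extSeq N N' w) * (F p (extSeq N N' w) * c p) :=
        Finset.sum_congr rfl (fun w _ => Finset.mul_sum _ _ _)
    _ = ∑ p ∈ s, ∑ w : ↥(window N N') → Bool,
          seqPMF N N' h Λ (extSeq N N' w) * (F p (extSeq N N' w) * c p) := Finset.sum_comm
    _ = ∑ p ∈ s, (∑ w : ↥(window N N') → Bool,
          seqPMF N N' h Λ (extSeq N N' w) * F p (extSeq N N' w)) * c p := by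
        refine Finset.sum_congr rfl (fun p _ => ?_)
        rw [Finset.sum_mul]
        exact Finset.sum_congr rfl (fun w _ => by ring)

lemma expect_quad (N N' : ℕ) (hN' : 1 ≤ N') (h : ℝ) (hh : 0 < h)
    (Λ : ℤ → (ℤ → Bool) → ℝ) (b B : ℝ) (hb : 0 < b)
    (hdep : ∀ (t : ℤ) (y y' : ℤ → Bool),
      (∀ i ∈ window N N', i < t → y i = y' i) → Λ t y = Λ t y')
    (hstar : ∀ t ∈ window N N', ∀ y : ℤ → Bool,
      0 < seqPMF N N' h Λ y → b ≤ Λ t y ∧ Λ t y ≤ B)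
    (μ : ℝ) (v : Param N N') :
    ((1 - Real.exp (-(h * b))) ^ 2 * Real.exp (-(h * B)) ^ (N' - 1)) * ‖v‖ ^ 2
      ≤ expect N N' h Λ (gvfun N N' μ v) := by
  have hpmf : ∀ y : ℤ → Bool, 0 ≤ seqPMF N N' h Λ y := by
    intro y
    rw [seqPMF_eq]
    exact le_of_lt (Finset.prod_pos (fun s hs => facQ_pos_all N N' h Λ b B hh hb hdep hstar y s hs))
  calc ((1 - Real.exp (-(h * b))) ^ 2 * Real.exp (-(h * B)) ^ (N' - 1)) * ‖v‖ ^ 2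
      = ∑ p ∈ kIdx N N', ((1 - Real.exp (-(h * b))) ^ 2 * Real.exp (-(h * B)) ^ (N' - 1))
          * (zent N N' v p.1 p.2) ^ 2 := by
        rw [norm_sq_eq, Finset.mul_sum]
    _ ≤ ∑ p ∈ kIdx N N', expect N N' h Λ (indf N' p) * (zent N N' v p.1 p.2) ^ 2 := by
        apply Finset.sum_le_sum
        intro p hp
        apply mul_le_mul_of_nonneg_right _ (sq_nonneg _)
        rw [kIdx, Finset.mem_filter, Finset.mem_product, Finset.mem_Icc, Finset.mem_Icc] at hp
        exact expect_ind_ge N N' hN' h hh Λ b B hb hdep hstar p.1 p.2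
          hp.1.2.1 hp.1.2.2 hp.2.1 hp.2.2
    _ = expect N N' h Λ (fun y => ∑ p ∈ kIdx N N', indf N' p y * (zent N N' v p.1 p.2) ^ 2) :=
        (expect_sum_mul N N' h Λ (kIdx N N') (indf N') (fun p => (zent N N' v p.1 p.2) ^ 2)).symm
    _ ≤ expect N N' h Λ (gvfun N N' μ v) :=
        expect_mono N N' h Λ hpmf _ _ (fun y => quadLB N N' hN' v y)

lemma kappa_le (N' : ℕ) (hN' : 1 ≤ N') (h b B : ℝ) (hh : 0 < h) (hb : 0 < b) (hbB : b ≤ B) :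
    Real.exp (-(2 * h * b)) * (b / B) ^ 2 * h ^ 2 * Real.exp (-(B * ((N' : ℝ) * h)))
      ≤ (Real.exp (-(h * B)) / (h * B) ^ 2) * h ^ 2
          * ((1 - Real.exp (-(h * b))) ^ 2 * Real.exp (-(h * B)) ^ (N' - 1)) := by
  have hB : 0 < B := lt_of_lt_of_le hb hbB
  have h1 : Real.exp (-(B * ((N' : ℝ) * h))) = Real.exp (-(h * B)) ^ N' := by
    rw [← Real.exp_nat_mul]; congr 1; ring
  have h3 : Real.exp (-(h * B)) ^ N'
      = Real.exp (-(h * B)) ^ (N' - 1) * Real.exp (-(h * B)) := by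
    conv_lhs => rw [show N' = (N' - 1) + 1 from by omega]
    rw [pow_succ]
  have h2 : Real.exp (-(2 * h * b)) = Real.exp (-(h * b)) ^ 2 := by
    rw [sq, ← Real.exp_add]; congr 1; ring
  have key : (h * b * Real.exp (-(h * b))) ^ 2 ≤ (1 - Real.exp (-(h * b))) ^ 2 := by
    apply pow_le_pow_left₀ (by positivity)
    exact mul_exp_le_one_sub (by positivity)
  rw [h1, h3, h2]
  have e1 : Real.exp (-(h * b)) ^ 2 * (b / B) ^ 2 * h ^ 2
        * (Real.exp (-(h * B)) ^ (N' - 1) * Real.exp (-(h * B)))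
      = (h * b * Real.exp (-(h * b))) ^ 2
        * (Real.exp (-(h * B)) ^ (N' - 1) * Real.exp (-(h * B)) / B ^ 2) := by
    field_simp
  have e2 : (Real.exp (-(h * B)) / (h * B) ^ 2) * h ^ 2
        * ((1 - Real.exp (-(h * b))) ^ 2 * Real.exp (-(h * B)) ^ (N' - 1))
      = (1 - Real.exp (-(h * b))) ^ 2
        * (Real.exp (-(h * B)) ^ (N' - 1) * Real.exp (-(h * B)) / B ^ 2) := by
    field_simp
  rw [e1, e2]
  exact mul_le_mul_of_nonneg_right key (by positivity)

/-- strong convexity of the expected negative log-likelihood. -/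
theorem negLogLik_strongly_convex
    (N N' : ℕ) (hN : 1 ≤ N) (hN' : 1 ≤ N') (h : ℝ) (hh : 0 < h)
    (Λ : ℤ → (ℤ → Bool) → ℝ)
    (hdep : ∀ (t : ℤ) (y y' : ℤ → Bool),
      (∀ i ∈ window N N', i < t → y i = y' i) → Λ t y = Λ t y')
    (μ : ℝ) (hμ : 0 < μ)
    (b B : ℝ) (hb : 0 < b) (hbB : b ≤ B)
    (hstar : ∀ t ∈ window N N', ∀ y : ℤ → Bool,
      0 < seqPMF N N' h Λ y → b ≤ Λ t y ∧ Λ t y ≤ B)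
    (ΘK : Set (Param N N')) (hne : ΘK.Nonempty)
    (hcomp : IsCompact ΘK) (hconv : Convex ℝ ΘK)
    (zstar : Param N N') (hzs : zstar ∈ ΘK)
    (htrue : ∀ t ∈ Finset.Icc (1 : ℤ) (N : ℤ), ∀ y : ℤ → Bool,
      Λ t y = modelIntensity N N' μ zstar t y)
    (hphys : ∀ z ∈ ΘK, ∀ t ∈ Finset.Icc (1 : ℤ) (N : ℤ), ∀ y : ℤ → Bool,
      b ≤ modelIntensity N N' μ z t y ∧ modelIntensity N N' μ z t y ≤ B)
    (κ' : ℝ)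
    (hκ' : κ' = Real.exp (-(2 * h * b)) * (b / B) ^ 2 * h ^ 2
        * Real.exp (-(B * ((N' : ℝ) * h)))) :
    ∀ z ∈ ΘK, ∀ z' ∈ ΘK, ∀ a : ℝ, 0 ≤ a → a ≤ 1 →
      negLogLik N N' h Λ μ (a • z + (1 - a) • z')
        ≤ a * negLogLik N N' h Λ μ z + (1 - a) * negLogLik N N' h Λ μ z'
          - κ' / 2 * (a * (1 - a) * ‖z - z'‖ ^ 2) := by
  intro z hz z' hz' a ha0 ha1
  have hB : 0 < B := lt_of_lt_of_le hb hbB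
  have hb2 : 0 ≤ 1 - a := by linarith
  have hab : a + (1 - a) = 1 := by ring
  have hzaΘ : a • z + (1 - a) • z' ∈ ΘK := hconv hz hz' ha0 hb2 hab
  have hpmf : ∀ y : ℤ → Bool, 0 ≤ seqPMF N N' h Λ y := by
    intro y
    rw [seqPMF_eq]
    exact le_of_lt (Finset.prod_pos
      (fun s hs => facQ_pos_all N N' h Λ b B hh hb hdep hstar y s hs))
  set v : Param N N' := z - z' with hv
  set c₀ : ℝ := Real.exp (-(h * B)) / (h * B) ^ 2 with hc₀
  set ρ₀ : ℝ := (1 - Real.exp (-(h * b))) ^ 2 * Real.exp (-(h * B)) ^ (N' - 1) with hρ₀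
  set K : ℝ := c₀ / 2 * (a * (1 - a)) * h ^ 2 with hK
  -- pointwise strong concavity of the log-likelihood
  have key1 : ∀ y : ℤ → Bool,
      a * Lfun N N' h μ z y + (1 - a) * Lfun N N' h μ z' y + K * gvfun N N' μ v y
        ≤ Lfun N N' h μ (a • z + (1 - a) • z') y := by
    intro y
    unfold Lfun gvfun
    rw [Finset.mul_sum, Finset.mul_sum, Finset.mul_sum, ← Finset.sum_add_distrib,
      ← Finset.sum_add_distrib]
    apply Finset.sum_le_sum
    intro t ht
    have hmz := hphys z hz t ht y
    have hmz' := hphys z' hz' t ht y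
    have haff : modelIntensity N N' μ (a • z + (1 - a) • z') t y
        = a * modelIntensity N N' μ z t y + (1 - a) * modelIntensity N N' μ z' t y :=
      mi_affine N N' μ a (1 - a) hab z z' t y
    rcases Bool.eq_false_or_eq_true (y t) with hyt | hyt
    swap
    · rw [bval_false hyt]
      apply le_of_eq
      rw [haff]
      ring
    · rw [bval_true hyt]
      have hpsi := psi_strong (m := h * b) (M := h * B) (mul_pos hh hb)
        (mul_le_mul_of_nonneg_left hbB (le_of_lt hh))
        (x := h * modelIntensity N N' μ z t y) (x' := h * modelIntensity N N' μ z' t y)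
        ⟨mul_le_mul_of_nonneg_left hmz.1 (le_of_lt hh),
          mul_le_mul_of_nonneg_left hmz.2 (le_of_lt hh)⟩
        ⟨mul_le_mul_of_nonneg_left hmz'.1 (le_of_lt hh),
          mul_le_mul_of_nonneg_left hmz'.2 (le_of_lt hh)⟩
        ha0 hb2 hab
      have harg : a * (h * modelIntensity N N' μ z t y)
            + (1 - a) * (h * modelIntensity N N' μ z' t y)
          = h * modelIntensity N N' μ (a • z + (1 - a) • z') t y := by
        rw [haff]; ring
      rw [harg] at hpsi
      have hD : (h * modelIntensity N N' μ z t y - h * modelIntensity N N' μ z' t y) ^ 2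
          = h ^ 2 * (∑ i ∈ Finset.Icc (t - (N' : ℤ)) (t - 1),
              bval (y i) * zent N N' v i t) ^ 2 := by
        rw [hv, ← mi_sub N N' μ z z' t y]
        ring
      rw [hD] at hpsi
      rw [hK, hc₀]
      nlinarith [hpsi]
  -- expectation-level inequality
  have key2 : a * expect N N' h Λ (Lfun N N' h μ z)
        + (1 - a) * expect N N' h Λ (Lfun N N' h μ z')
        + K * expect N N' h Λ (gvfun N N' μ v)
      ≤ expect N N' h Λ (Lfun N N' h μ (a • z + (1 - a) • z')) := by
    rw [← expect_lin N N' h Λ a (1 - a) K (Lfun N N' h μ z) (Lfun N N' h μ z')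
      (gvfun N N' μ v)]
    exact expect_mono N N' h Λ hpmf _ _ key1
  have key3 : ρ₀ * ‖v‖ ^ 2 ≤ expect N N' h Λ (gvfun N N' μ v) := by
    rw [hρ₀]
    exact expect_quad N N' hN' h hh Λ b B hb hdep hstar μ v
  have hK0 : 0 ≤ K := by
    rw [hK, hc₀]
    have := mul_nonneg ha0 hb2
    positivity
  have hκeff : κ' / 2 ≤ c₀ / 2 * h ^ 2 * ρ₀ := by
    have := kappa_le N' hN' h b B hh hb hbB
    rw [← hκ'] at this
    rw [hc₀, hρ₀]
    linarith
  have hfinal : κ' / 2 * (a * (1 - a) * ‖v‖ ^ 2) ≤ K * expect N N' h Λ (gvfun N N' μ v) := by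
    have h1 : K * (ρ₀ * ‖v‖ ^ 2) ≤ K * expect N N' h Λ (gvfun N N' μ v) :=
      mul_le_mul_of_nonneg_left key3 hK0
    have h2 : κ' / 2 * (a * (1 - a) * ‖v‖ ^ 2)
        ≤ (c₀ / 2 * h ^ 2 * ρ₀) * (a * (1 - a) * ‖v‖ ^ 2) :=
      mul_le_mul_of_nonneg_right hκeff
        (mul_nonneg (mul_nonneg ha0 hb2) (sq_nonneg _))
    have h3 : (c₀ / 2 * h ^ 2 * ρ₀) * (a * (1 - a) * ‖v‖ ^ 2) = K * (ρ₀ * ‖v‖ ^ 2) := by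
      rw [hK]; ring
    linarith
  have hnl : ∀ u : Param N N',
      negLogLik N N' h Λ μ u = - expect N N' h Λ (Lfun N N' h μ u) := fun u => rfl
  rw [hnl, hnl, hnl]
  linarith [key2, hfinal]
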